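/- Let θ and θ′ be connected skew diagrams and φ : P(θ) → P(θ′) an isomorphism of posets. Then either θ = θ′ (as translation classes of skew diagrams) and φ is the identity, or θ^T = θ′ and φ is given by transposing θ. -/

import Mathlib

/-- A cell (box) of the plane: `(row, column)`. -/
abbrev Cell : Type := ℤ × ℤ

/-- The transpose of a cell. -/
def transposeCell (c : Cell) : Cell := (c.2, c.1)

/-- A finite set of cells is a skew diagram iff it is order-convex for the
componentwise order; this characterizes the translates of the sets of boxes
`{(i,j) : λ_i < j ≤ μ_i}` for partitions `λ ⊆ μ` (skew diagrams are considered
up to translation, so we work with arbitrary such convex finite sets). -/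
def IsSkewDiagram (S : Finset Cell) : Prop :=
  ∀ a b c : Cell, a ∈ S → b ∈ S → a ≤ c → c ≤ b → c ∈ S

/-- The diagonal value `j − i` of a cell `(i, j)`. -/
def diagVal (c : Cell) : ℤ := c.2 - c.1

/-- A skew diagram is connected iff no NW-SE anti-diagonal line partitions it into
two nonempty parts, one strictly northeast and one strictly southwest of the line. -/
def SkewConnected (S : Finset Cell) : Prop :=
  ¬ ∃ d : ℤ, (∀ c ∈ S, diagVal c ≠ d) ∧ (∃ c ∈ S, diagVal c < d) ∧ (∃ c ∈ S, d < diagVal c)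

namespace SkewRigidity

def rk (c : Cell) : ℤ := c.1 + c.2

lemma cell_eq_of (a b : Cell) (h1 : rk a = rk b) (h2 : diagVal a = diagVal b) : a = b := by
  obtain ⟨i, j⟩ := a; obtain ⟨i', j'⟩ := b
  simp only [rk, diagVal] at h1 h2
  simp only [Prod.mk.injEq]
  omega

lemma comparable_of_diag {a b : Cell} (h1 : diagVal a ≤ diagVal b + 1)
    (h2 : diagVal b ≤ diagVal a + 1) : a ≤ b ∨ b ≤ a := by
  obtain ⟨i, j⟩ := a; obtain ⟨i', j'⟩ := b
  simp only [diagVal] at h1 h2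
  simp only [Prod.mk_le_mk]
  omega

lemma rk_eq_of_incomp {a b : Cell} (hg : diagVal b = diagVal a + 2)
    (h : ¬ (a ≤ b ∨ b ≤ a)) : rk a = rk b := by
  obtain ⟨i, j⟩ := a; obtain ⟨i', j'⟩ := b
  simp only [diagVal] at hg
  simp only [Prod.mk_le_mk, not_or, not_and_or, not_le] at h
  simp only [rk]
  omega

lemma int_sq_one {a : ℤ} (h : a ^ 2 = 1) : a = 1 ∨ a = -1 := by
  have h2 : (a - 1) * (a + 1) = 0 := by linear_combination h
  rcases mul_eq_zero.mp h2 with h3 | h3 <;> [left; right] <;> omega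

variable {S : Finset Cell}

lemma covBy_iff (hS : IsSkewDiagram S) (x y : {c : Cell // c ∈ S}) :
    x ⋖ y ↔ ((y : Cell) = ((x : Cell).1 + 1, (x : Cell).2) ∨
      (y : Cell) = ((x : Cell).1, (x : Cell).2 + 1)) := by
  constructor
  · rintro ⟨hlt, hmax⟩
    have hab : (x : Cell) ≤ (y : Cell) := Subtype.coe_le_coe.mpr hlt.le
    have hne : (x : Cell) ≠ (y : Cell) := fun h => hlt.ne (Subtype.coe_injective h)
    by_contra hcon
    push_neg at hcon
    obtain ⟨hcon1, hcon2⟩ := hcon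
    have h1 : (x : Cell).1 ≤ (y : Cell).1 := hab.1
    have h2 : (x : Cell).2 ≤ (y : Cell).2 := hab.2
    -- choose intermediate cell
    by_cases hc : (x : Cell).1 < (y : Cell).1
    · set w : Cell := ((x : Cell).1 + 1, (x : Cell).2) with hw
      have hxw : (x : Cell) ≤ w := by constructor <;> simp [hw]
      have hwy : w ≤ (y : Cell) := by
        constructor
        · simpa [hw] using hc
        · simpa [hw] using h2
      have hwS : w ∈ S := hS _ _ _ x.2 y.2 hxw hwy
      have hxw' : x < (⟨w, hwS⟩ : {c : Cell // c ∈ S}) := by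
        rw [← Subtype.coe_lt_coe]
        exact lt_of_le_of_ne hxw (by simp [hw, Prod.ext_iff])
      have hwy' : (⟨w, hwS⟩ : {c : Cell // c ∈ S}) < y := by
        rw [← Subtype.coe_lt_coe]
        exact lt_of_le_of_ne hwy (fun h => hcon1 h.symm)
      exact hmax hxw' hwy'
    · have hc1 : (x : Cell).1 = (y : Cell).1 := le_antisymm h1 (not_lt.mp hc)
      have hc2 : (x : Cell).2 < (y : Cell).2 := by
        rcases lt_or_eq_of_le h2 with h | h
        · exact h
        · exact absurd (Prod.ext hc1 h) hne
      set w : Cell := ((x : Cell).1, (x : Cell).2 + 1) with hw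
      have hxw : (x : Cell) ≤ w := by constructor <;> simp [hw]
      have hwy : w ≤ (y : Cell) := by
        constructor
        · simpa [hw] using h1
        · simpa [hw] using hc2
      have hwS : w ∈ S := hS _ _ _ x.2 y.2 hxw hwy
      have hxw' : x < (⟨w, hwS⟩ : {c : Cell // c ∈ S}) := by
        rw [← Subtype.coe_lt_coe]
        exact lt_of_le_of_ne hxw (by simp [hw, Prod.ext_iff])
      have hwy' : (⟨w, hwS⟩ : {c : Cell // c ∈ S}) < y := by
        rw [← Subtype.coe_lt_coe]
        exact lt_of_le_of_ne hwy (fun h => hcon2 h.symm)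
      exact hmax hxw' hwy'
  · intro h
    have hle : (x : Cell) ≤ (y : Cell) := by
      rcases h with h | h <;> rw [h] <;> exact ⟨by simp, by simp⟩
    have hne : x ≠ y := by
      intro hh
      subst hh
      rcases h with h | h
      · exact absurd (congrArg Prod.fst h) (by simp)
      · exact absurd (congrArg Prod.snd h) (by simp)
    have hlt : x < y := lt_of_le_of_ne (Subtype.coe_le_coe.mp hle) hne
    refine ⟨hlt, fun z hz1 hz2 => ?_⟩
    have hz1' : (x : Cell) < (z : Cell) := Subtype.coe_lt_coe.mpr hz1
    have hz2' : (z : Cell) < (y : Cell) := Subtype.coe_lt_coe.mpr hz2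
    have e1 := hz1'.le.1; have e2 := hz1'.le.2
    have e3 := hz2'.le.1; have e4 := hz2'.le.2
    have e5 : (x : Cell) ≠ (z : Cell) := hz1'.ne
    have e6 : (z : Cell) ≠ (y : Cell) := hz2'.ne
    simp only [ne_eq, Prod.ext_iff, not_and_or] at e5 e6
    rcases h with h | h <;> rw [h] at e3 e4 e6 <;> simp at e3 e4 e6 <;> omega


variable {T : Finset Cell}

lemma rank_step (φ : {c : Cell // c ∈ S} ≃o {c : Cell // c ∈ T})
    (hS : IsSkewDiagram S) (hT : IsSkewDiagram T) {x y : {c : Cell // c ∈ S}}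
    (h : x ⋖ y) :
    rk (φ y : Cell) = rk (φ x : Cell) + 1 ∧ rk (y : Cell) = rk (x : Cell) + 1 := by
  have h2 : φ x ⋖ φ y := (apply_covBy_apply_iff φ).mpr h
  rw [covBy_iff hT] at h2
  rw [covBy_iff hS] at h
  constructor
  · rcases h2 with h2 | h2 <;> rw [h2] <;> simp [rk] <;> ring
  · rcases h with h | h <;> rw [h] <;> simp [rk] <;> ring

lemma exists_cover (hS : IsSkewDiagram S) {x y : {c : Cell // c ∈ S}} (hxy : x ≤ y)
    (hne : x ≠ y) : ∃ w, x ⋖ w ∧ w ≤ y := by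
  have hab : (x : Cell) ≤ (y : Cell) := Subtype.coe_le_coe.mpr hxy
  by_cases hc : (x : Cell).1 < (y : Cell).1
  · have hwy : ((x : Cell).1 + 1, (x : Cell).2) ≤ (y : Cell) := ⟨by omega, hab.2⟩
    refine ⟨⟨((x : Cell).1 + 1, (x : Cell).2),
      hS _ _ _ x.2 y.2 ⟨by simp, by simp⟩ hwy⟩, ?_, ?_⟩
    · rw [covBy_iff hS]; left; rfl
    · exact Subtype.coe_le_coe.mp hwy
  · have hc1 : (x : Cell).1 = (y : Cell).1 := le_antisymm hab.1 (not_lt.mp hc)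
    have hc2 : (x : Cell).2 < (y : Cell).2 := by
      rcases lt_or_eq_of_le hab.2 with h | h
      · exact h
      · exact absurd (Subtype.ext (Prod.ext hc1 h)) hne
    have hwy : ((x : Cell).1, (x : Cell).2 + 1) ≤ (y : Cell) := ⟨hab.1, by omega⟩
    refine ⟨⟨((x : Cell).1, (x : Cell).2 + 1),
      hS _ _ _ x.2 y.2 ⟨by simp, by simp⟩ hwy⟩, ?_, ?_⟩
    · rw [covBy_iff hS]; right; rfl
    · exact Subtype.coe_le_coe.mp hwy

lemma rank_mono_aux (φ : {c : Cell // c ∈ S} ≃o {c : Cell // c ∈ T})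
    (hS : IsSkewDiagram S) (hT : IsSkewDiagram T) :
    ∀ n : ℕ, ∀ x y : {c : Cell // c ∈ S}, x ≤ y → rk (y : Cell) - rk (x : Cell) = n →
    rk (φ y : Cell) - rk (φ x : Cell) = n := by
  intro n
  induction n with
  | zero =>
    intro x y hxy h0
    have hab : (x : Cell) ≤ (y : Cell) := Subtype.coe_le_coe.mpr hxy
    have : (x : Cell) = (y : Cell) := by
      obtain ⟨h1, h2⟩ := hab
      simp only [rk, Nat.cast_zero] at h0
      exact Prod.ext (by omega) (by omega)
    rw [Subtype.ext this]
    simp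
  | succ n ih =>
    intro x y hxy h
    have hne : x ≠ y := by
      intro hh
      rw [hh] at h
      simp at h
      omega
    obtain ⟨w, hcov, hwy⟩ := exists_cover hS hxy hne
    have hst := rank_step φ hS hT hcov
    have hwn : rk (y : Cell) - rk (w : Cell) = n := by push_cast at h ⊢; omega
    have := ih w y hwy hwn
    push_cast at this ⊢
    omega

lemma rank_mono (φ : {c : Cell // c ∈ S} ≃o {c : Cell // c ∈ T})
    (hS : IsSkewDiagram S) (hT : IsSkewDiagram T) {x y : {c : Cell // c ∈ S}} (hxy : x ≤ y) :
    rk (φ y : Cell) - rk (φ x : Cell) = rk (y : Cell) - rk (x : Cell) := by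
  have hab : (x : Cell) ≤ (y : Cell) := Subtype.coe_le_coe.mpr hxy
  have hnn : 0 ≤ rk (y : Cell) - rk (x : Cell) := by
    obtain ⟨h1, h2⟩ := hab; simp only [rk]; omega
  have := rank_mono_aux φ hS hT (rk (y : Cell) - rk (x : Cell)).toNat x y hxy
    (by rw [Int.toNat_of_nonneg hnn])
  rw [Int.toNat_of_nonneg hnn] at this
  exact this

lemma rank_comp (φ : {c : Cell // c ∈ S} ≃o {c : Cell // c ∈ T})
    (hS : IsSkewDiagram S) (hT : IsSkewDiagram T) {x y : {c : Cell // c ∈ S}}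
    (hxy : x ≤ y ∨ y ≤ x) :
    rk (φ y : Cell) - rk (φ x : Cell) = rk (y : Cell) - rk (x : Cell) := by
  rcases hxy with h | h
  · exact rank_mono φ hS hT h
  · have := rank_mono φ hS hT h
    omega

lemma gsq (φ : {c : Cell // c ∈ S} ≃o {c : Cell // c ∈ T})
    (hS : IsSkewDiagram S) (hT : IsSkewDiagram T) {x y : {c : Cell // c ∈ S}} (hxy : x ≤ y) :
    (diagVal (φ y : Cell) - diagVal (φ x : Cell)) ^ 2
      = (diagVal (y : Cell) - diagVal (x : Cell)) ^ 2 := by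
  have hab : (x : Cell) ≤ (y : Cell) := Subtype.coe_le_coe.mpr hxy
  have hab' : (φ x : Cell) ≤ (φ y : Cell) := Subtype.coe_le_coe.mpr (φ.monotone hxy)
  have hsum := rank_mono φ hS hT hxy
  have hcard : (Finset.Icc (x : Cell) (y : Cell)).card
      = (Finset.Icc (φ x : Cell) (φ y : Cell)).card := by
    refine Finset.card_bij'
      (fun c hc => (φ ⟨c, hS _ _ c x.2 y.2 (Finset.mem_Icc.mp hc).1 (Finset.mem_Icc.mp hc).2⟩ : Cell))
      (fun c hc => (φ.symm ⟨c, hT _ _ c (φ x).2 (φ y).2 (Finset.mem_Icc.mp hc).1 (Finset.mem_Icc.mp hc).2⟩ : Cell))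
      ?_ ?_ ?_ ?_
    · intro c hc
      rw [Finset.mem_Icc]
      obtain ⟨h1, h2⟩ := Finset.mem_Icc.mp hc
      exact ⟨Subtype.coe_le_coe.mpr (φ.monotone (Subtype.coe_le_coe.mp h1)),
        Subtype.coe_le_coe.mpr (φ.monotone (Subtype.coe_le_coe.mp h2))⟩
    · intro c hc
      rw [Finset.mem_Icc]
      obtain ⟨h1, h2⟩ := Finset.mem_Icc.mp hc
      have hcT : c ∈ T := hT _ _ c (φ x).2 (φ y).2 h1 h2
      constructor
      · have h3 : φ.symm (φ x) ≤ φ.symm ⟨c, hcT⟩ :=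
          φ.symm.monotone (Subtype.coe_le_coe.mp h1)
        rw [OrderIso.symm_apply_apply] at h3
        exact Subtype.coe_le_coe.mpr h3
      · have h3 : φ.symm ⟨c, hcT⟩ ≤ φ.symm (φ y) :=
          φ.symm.monotone (Subtype.coe_le_coe.mp h2)
        rw [OrderIso.symm_apply_apply] at h3
        exact Subtype.coe_le_coe.mpr h3
    · intro c hc
      simp [Subtype.coe_eta]
    · intro c hc
      simp [Subtype.coe_eta]
  rw [Finset.card_Icc_prod, Finset.card_Icc_prod, Int.card_Icc, Int.card_Icc,
    Int.card_Icc, Int.card_Icc] at hcard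
  have hZ : ((y:Cell).1 + 1 - (x:Cell).1) * ((y:Cell).2 + 1 - (x:Cell).2)
      = ((φ y : Cell).1 + 1 - (φ x : Cell).1) * ((φ y : Cell).2 + 1 - (φ x : Cell).2) := by
    have := congrArg (fun n : ℕ => (n : ℤ)) hcard
    push_cast at this
    rwa [Int.toNat_of_nonneg (by obtain ⟨h1, h2⟩ := hab; omega),
      Int.toNat_of_nonneg (by obtain ⟨h1, h2⟩ := hab; omega),
      Int.toNat_of_nonneg (by obtain ⟨h1, h2⟩ := hab'; omega),
      Int.toNat_of_nonneg (by obtain ⟨h1, h2⟩ := hab'; omega)] at this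
  simp only [rk] at hsum
  simp only [diagVal]
  have hpq : ((y:Cell).1 - (x:Cell).1) * ((y:Cell).2 - (x:Cell).2)
      = ((φ y : Cell).1 - (φ x : Cell).1) * ((φ y : Cell).2 - (φ x : Cell).2) := by
    linear_combination hZ + hsum
  linear_combination (((y:Cell).1 + (y:Cell).2 - (x:Cell).1 - (x:Cell).2)
    + ((φ y : Cell).1 + (φ y : Cell).2 - (φ x : Cell).1 - (φ x : Cell).2)) * hsum + 4 * hpq


lemma exists_diag' (hcS : SkewConnected S) {x y : {c : Cell // c ∈ S}} {d : ℤ}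
    (hd1 : diagVal (x : Cell) ≤ d) (hd2 : d ≤ diagVal (y : Cell)) :
    ∃ z : {c : Cell // c ∈ S}, diagVal (z : Cell) = d := by
  by_contra hcon
  push_neg at hcon
  have hcon' : ∀ c ∈ S, diagVal c ≠ d := fun c hc => hcon ⟨c, hc⟩
  exact hcS ⟨d, hcon', ⟨x, x.2, lt_of_le_of_ne hd1 (hcon' _ x.2)⟩,
    ⟨y, y.2, lt_of_le_of_ne hd2 (fun hh => hcon' _ y.2 hh.symm)⟩⟩

lemma comp_of_diag {x y : {c : Cell // c ∈ S}}
    (h1 : diagVal (x : Cell) ≤ diagVal (y : Cell) + 1)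
    (h2 : diagVal (y : Cell) ≤ diagVal (x : Cell) + 1) : x ≤ y ∨ y ≤ x := by
  rcases comparable_of_diag h1 h2 with h | h
  · exact Or.inl (Subtype.coe_le_coe.mp h)
  · exact Or.inr (Subtype.coe_le_coe.mp h)

lemma gsq_comp (φ : {c : Cell // c ∈ S} ≃o {c : Cell // c ∈ T})
    (hS : IsSkewDiagram S) (hT : IsSkewDiagram T) {x y : {c : Cell // c ∈ S}}
    (hxy : x ≤ y ∨ y ≤ x) :
    (diagVal (φ y : Cell) - diagVal (φ x : Cell)) ^ 2
      = (diagVal (y : Cell) - diagVal (x : Cell)) ^ 2 := by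
  rcases hxy with h | h
  · exact gsq φ hS hT h
  · have := gsq φ hS hT h
    linear_combination this

lemma diag_eq (φ : {c : Cell // c ∈ S} ≃o {c : Cell // c ∈ T})
    (hS : IsSkewDiagram S) (hT : IsSkewDiagram T) {x y : {c : Cell // c ∈ S}}
    (h : diagVal (y : Cell) = diagVal (x : Cell)) :
    diagVal (φ y : Cell) = diagVal (φ x : Cell) := by
  have hsq := gsq_comp φ hS hT (comp_of_diag (x := x) (y := y) (by omega) (by omega))
  rw [h, sub_self] at hsq
  have h2 : (diagVal (φ y : Cell) - diagVal (φ x : Cell)) ^ 2 = 0 := by simpa using hsq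
  have h0 := (pow_eq_zero_iff two_ne_zero).mp h2
  omega

lemma step_sq (φ : {c : Cell // c ∈ S} ≃o {c : Cell // c ∈ T})
    (hS : IsSkewDiagram S) (hT : IsSkewDiagram T) {x y : {c : Cell // c ∈ S}}
    (h : diagVal (y : Cell) = diagVal (x : Cell) + 1) :
    (diagVal (φ y : Cell) - diagVal (φ x : Cell)) ^ 2 = 1 := by
  have hsq := gsq_comp φ hS hT (comp_of_diag (x := x) (y := y) (by omega) (by omega))
  rw [h] at hsq
  linear_combination hsq

lemma rsh_aux (φ : {c : Cell // c ∈ S} ≃o {c : Cell // c ∈ T})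
    (hS : IsSkewDiagram S) (hT : IsSkewDiagram T) (hcS : SkewConnected S) :
    ∀ n : ℕ, ∀ x y : {c : Cell // c ∈ S}, diagVal (y : Cell) - diagVal (x : Cell) = n →
    rk (φ y : Cell) - rk (y : Cell) = rk (φ x : Cell) - rk (x : Cell) := by
  intro n
  induction n with
  | zero =>
    intro x y h
    push_cast at h
    have := rank_comp φ hS hT (x := x) (y := y) (comp_of_diag (by omega) (by omega))
    omega
  | succ n ih =>
    intro x y h
    push_cast at h
    obtain ⟨z, hz⟩ := exists_diag' hcS (x := x) (y := y) (d := diagVal (x : Cell) + n)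
      (by omega) (by omega)
    have h1 := ih x z (by push_cast; omega)
    have h2 := rank_comp φ hS hT (x := z) (y := y) (comp_of_diag (by omega) (by omega))
    omega

lemma rsh_const (φ : {c : Cell // c ∈ S} ≃o {c : Cell // c ∈ T})
    (hS : IsSkewDiagram S) (hT : IsSkewDiagram T) (hcS : SkewConnected S)
    (x y : {c : Cell // c ∈ S}) :
    rk (φ y : Cell) - rk (y : Cell) = rk (φ x : Cell) - rk (x : Cell) := by
  rcases le_total (diagVal (x : Cell)) (diagVal (y : Cell)) with h | h
  · exact rsh_aux φ hS hT hcS (diagVal (y : Cell) - diagVal (x : Cell)).toNat x y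
      (by rw [Int.toNat_of_nonneg (by omega)])
  · exact (rsh_aux φ hS hT hcS (diagVal (x : Cell) - diagVal (y : Cell)).toNat y x
      (by rw [Int.toNat_of_nonneg (by omega)])).symm

lemma step_eq (φ : {c : Cell // c ∈ S} ≃o {c : Cell // c ∈ T})
    (hS : IsSkewDiagram S) (hT : IsSkewDiagram T) (hcS : SkewConnected S)
    {x y z : {c : Cell // c ∈ S}}
    (h1 : diagVal (y : Cell) = diagVal (x : Cell) + 1)
    (h2 : diagVal (z : Cell) = diagVal (y : Cell) + 1) :
    diagVal (φ z : Cell) - diagVal (φ y : Cell)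
      = diagVal (φ y : Cell) - diagVal (φ x : Cell) := by
  have ha := step_sq φ hS hT h1
  have hb := step_sq φ hS hT h2
  have key : diagVal (φ z : Cell) ≠ diagVal (φ x : Cell) := by
    intro heq
    by_cases hcomp : x ≤ z ∨ z ≤ x
    · have h4 := gsq_comp φ hS hT hcomp
      have h6 : diagVal (z : Cell) - diagVal (x : Cell) = 2 := by omega
      have h7 : (diagVal (φ z : Cell) - diagVal (φ x : Cell)) ^ 2 = 4 := by
        linear_combination h4 + (diagVal (z : Cell) - diagVal (x : Cell) + 2) * h6
      rw [heq, sub_self] at h7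
      norm_num at h7
    · have hcomp' : ¬ ((x : Cell) ≤ (z : Cell) ∨ (z : Cell) ≤ (x : Cell)) := by
        intro hh
        rcases hh with hh | hh
        · exact hcomp (Or.inl (Subtype.coe_le_coe.mp hh))
        · exact hcomp (Or.inr (Subtype.coe_le_coe.mp hh))
      have hrxz : rk (x : Cell) = rk (z : Cell) := rk_eq_of_incomp (by omega) hcomp'
      have e1 := rank_comp φ hS hT (x := x) (y := y) (comp_of_diag (by omega) (by omega))
      have e2 := rank_comp φ hS hT (x := y) (y := z) (comp_of_diag (by omega) (by omega))
      have heqc : (φ x : Cell) = (φ z : Cell) := cell_eq_of _ _ (by omega) heq.symm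
      have hxz : x = z := φ.injective (Subtype.ext heqc)
      have : diagVal (x : Cell) = diagVal (z : Cell) := by rw [hxz]
      omega
  rcases int_sq_one ha with ha' | ha' <;> rcases int_sq_one hb with hb' | hb' <;> omega

lemma step_const_aux (φ : {c : Cell // c ∈ S} ≃o {c : Cell // c ∈ T})
    (hS : IsSkewDiagram S) (hT : IsSkewDiagram T) (hcS : SkewConnected S) :
    ∀ n : ℕ, ∀ u v x y : {c : Cell // c ∈ S},
    diagVal (v : Cell) = diagVal (u : Cell) + 1 →
    diagVal (y : Cell) = diagVal (x : Cell) + 1 →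
    diagVal (x : Cell) - diagVal (u : Cell) = n →
    diagVal (φ v : Cell) - diagVal (φ u : Cell)
      = diagVal (φ y : Cell) - diagVal (φ x : Cell) := by
  intro n
  induction n with
  | zero =>
    intro u v x y h1 h2 h3
    push_cast at h3
    have e1 := diag_eq φ hS hT (x := u) (y := x) (by omega)
    have e2 := diag_eq φ hS hT (x := v) (y := y) (by omega)
    omega
  | succ n ih =>
    intro u v x y h1 h2 h3
    push_cast at h3
    obtain ⟨z, hz⟩ := exists_diag' hcS (x := u) (y := x) (d := diagVal (u : Cell) + 1)
      (by omega) (by omega)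
    obtain ⟨z', hz'⟩ := exists_diag' hcS (x := u) (y := y) (d := diagVal (u : Cell) + 2)
      (by omega) (by omega)
    have e0 := step_eq φ hS hT hcS (x := u) (y := z) (z := z') (by omega) (by omega)
    have e1 := diag_eq φ hS hT (x := v) (y := z) (by omega)
    have e2 := ih z z' x y (by omega) h2 (by push_cast; omega)
    omega

lemma step_const (φ : {c : Cell // c ∈ S} ≃o {c : Cell // c ∈ T})
    (hS : IsSkewDiagram S) (hT : IsSkewDiagram T) (hcS : SkewConnected S)
    {u v x y : {c : Cell // c ∈ S}}
    (h1 : diagVal (v : Cell) = diagVal (u : Cell) + 1)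
    (h2 : diagVal (y : Cell) = diagVal (x : Cell) + 1) :
    diagVal (φ v : Cell) - diagVal (φ u : Cell)
      = diagVal (φ y : Cell) - diagVal (φ x : Cell) := by
  rcases le_total (diagVal (u : Cell)) (diagVal (x : Cell)) with h | h
  · exact step_const_aux φ hS hT hcS (diagVal (x : Cell) - diagVal (u : Cell)).toNat u v x y
      h1 h2 (by rw [Int.toNat_of_nonneg (by omega)])
  · exact (step_const_aux φ hS hT hcS (diagVal (u : Cell) - diagVal (x : Cell)).toNat x y u v
      h2 h1 (by rw [Int.toNat_of_nonneg (by omega)])).symm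

lemma diag_formula (φ : {c : Cell // c ∈ S} ≃o {c : Cell // c ∈ T})
    (hS : IsSkewDiagram S) (hT : IsSkewDiagram T) (hcS : SkewConnected S)
    (u₀ v₀ : {c : Cell // c ∈ S})
    (huv : diagVal (v₀ : Cell) = diagVal (u₀ : Cell) + 1) :
    ∀ n : ℕ, ∀ x y : {c : Cell // c ∈ S}, diagVal (y : Cell) - diagVal (x : Cell) = n →
    diagVal (φ y : Cell) - diagVal (φ x : Cell)
      = (diagVal (φ v₀ : Cell) - diagVal (φ u₀ : Cell)) * n := by
  intro n
  induction n with
  | zero =>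
    intro x y h
    push_cast at h
    have := diag_eq φ hS hT (x := x) (y := y) (by omega)
    push_cast
    rw [mul_zero]
    omega
  | succ n ih =>
    intro x y h
    push_cast at h
    obtain ⟨z, hz⟩ := exists_diag' hcS (x := x) (y := y) (d := diagVal (x : Cell) + n)
      (by omega) (by omega)
    have e1 := ih x z (by push_cast; omega)
    have e2 := step_const φ hS hT hcS (u := u₀) (v := v₀) (x := z) (y := y) huv (by omega)
    push_cast
    linear_combination e1 - e2

end SkewRigidity

open SkewRigidity in
/-- an isomorphism of box posets of connected skew diagrams is either
the identity (a translation, since skew diagrams are taken up to translation),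
with `θ = θ′` up to translation, or is given by transposing, with `θ^T = θ′` up to
translation.  Here the poset `P(θ)` generated by the covering relations coincides
with the componentwise order carried by the subtype of cells. -/
theorem orderIso_rigidity
    (S T : Finset Cell) (hS : IsSkewDiagram S) (hT : IsSkewDiagram T)
    (hcS : SkewConnected S) (hcT : SkewConnected T)
    (φ : {c : Cell // c ∈ S} ≃o {c : Cell // c ∈ T}) :
    (∃ v : Cell, T = S.image (· + v) ∧
      ∀ s : {c : Cell // c ∈ S}, (φ s : Cell) = (s : Cell) + v) ∨
    (∃ v : Cell, T = (S.image transposeCell).image (· + v) ∧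
      ∀ s : {c : Cell // c ∈ S}, (φ s : Cell) = transposeCell (s : Cell) + v) := by
  classical
  rcases S.eq_empty_or_nonempty with hSe | ⟨c₀cell, hc₀⟩
  · left
    refine ⟨(0, 0), ?_, ?_⟩
    · have hTe : T = ∅ := by
        rw [Finset.eq_empty_iff_forall_notMem]
        intro t ht
        exact absurd (φ.symm ⟨t, ht⟩).2 (by simp [hSe])
      rw [hTe, hSe]; simp
    · intro s
      exact absurd s.2 (by simp [hSe])
  · set c₀ : {c : Cell // c ∈ S} := ⟨c₀cell, hc₀⟩ with hc₀def
    have hrk : ∀ s : {c : Cell // c ∈ S},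
        rk (φ s : Cell) - rk (s : Cell) = rk (φ c₀ : Cell) - rk (c₀ : Cell) :=
      fun s => rsh_const φ hS hT hcS c₀ s
    have hdiag : ∃ ε : ℤ, (ε = 1 ∨ ε = -1) ∧ ∀ s : {c : Cell // c ∈ S},
        diagVal (φ s : Cell) - diagVal (φ c₀ : Cell)
          = ε * (diagVal (s : Cell) - diagVal (c₀ : Cell)) := by
      by_cases hstep : ∃ u v : {c : Cell // c ∈ S},
          diagVal (v : Cell) = diagVal (u : Cell) + 1
      · obtain ⟨u₀, v₀, huv⟩ := hstep
        refine ⟨diagVal (φ v₀ : Cell) - diagVal (φ u₀ : Cell),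
          int_sq_one (step_sq φ hS hT huv), ?_⟩
        intro s
        rcases le_total (diagVal (c₀ : Cell)) (diagVal (s : Cell)) with hle | hle
        · have hf := diag_formula φ hS hT hcS u₀ v₀ huv
            (diagVal (s : Cell) - diagVal (c₀ : Cell)).toNat c₀ s
            (by rw [Int.toNat_of_nonneg (by omega)])
          rw [Int.toNat_of_nonneg (by omega)] at hf
          exact hf
        · have hf := diag_formula φ hS hT hcS u₀ v₀ huv
            (diagVal (c₀ : Cell) - diagVal (s : Cell)).toNat s c₀
            (by rw [Int.toNat_of_nonneg (by omega)])
          rw [Int.toNat_of_nonneg (by omega)] at hf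
          linear_combination (-1 : ℤ) * hf
      · refine ⟨1, Or.inl rfl, ?_⟩
        intro s
        have hdeq : diagVal (s : Cell) = diagVal (c₀ : Cell) := by
          by_contra hne
          rcases lt_or_gt_of_ne hne with hlt | hlt
          · obtain ⟨z, hz⟩ := exists_diag' hcS (x := s) (y := c₀)
              (d := diagVal (s : Cell) + 1) (by omega) (by omega)
            exact hstep ⟨s, z, by omega⟩
          · obtain ⟨z, hz⟩ := exists_diag' hcS (x := c₀) (y := s)
              (d := diagVal (c₀ : Cell) + 1) (by omega) (by omega)
            exact hstep ⟨c₀, z, by omega⟩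
        have he := diag_eq φ hS hT (x := c₀) (y := s) hdeq
        rw [hdeq, sub_self, mul_zero]
        omega
    obtain ⟨ε, hε, hd⟩ := hdiag
    rcases hε with hε | hε
    · left
      have hpoint : ∀ s : {c : Cell // c ∈ S},
          (φ s : Cell) = (s : Cell) + ((φ c₀ : Cell) - (c₀ : Cell)) := by
        intro s
        have h1 := hrk s
        have h2 := hd s
        rw [hε, one_mul] at h2
        simp only [rk, diagVal] at h1 h2
        apply Prod.ext
        · simp only [Prod.fst_add, Prod.fst_sub]; omega
        · simp only [Prod.snd_add, Prod.snd_sub]; omega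
      refine ⟨(φ c₀ : Cell) - (c₀ : Cell), ?_, hpoint⟩
      ext t
      simp only [Finset.mem_image]
      constructor
      · intro ht
        refine ⟨(φ.symm ⟨t, ht⟩ : Cell), (φ.symm ⟨t, ht⟩).2, ?_⟩
        have hp := hpoint (φ.symm ⟨t, ht⟩)
        rw [OrderIso.apply_symm_apply] at hp
        simpa using hp.symm
      · rintro ⟨c, hc, rfl⟩
        have hp := hpoint ⟨c, hc⟩
        simp only at hp ⊢
        rw [← hp]
        exact (φ ⟨c, hc⟩).2
    · right
      have hpoint : ∀ s : {c : Cell // c ∈ S},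
          (φ s : Cell) = transposeCell (s : Cell)
            + ((φ c₀ : Cell) - transposeCell (c₀ : Cell)) := by
        intro s
        have h1 := hrk s
        have h2 := hd s
        rw [hε] at h2
        simp only [rk, diagVal, transposeCell] at h1 h2 ⊢
        apply Prod.ext
        · simp only [Prod.fst_add, Prod.fst_sub]; omega
        · simp only [Prod.snd_add, Prod.snd_sub]; omega
      refine ⟨(φ c₀ : Cell) - transposeCell (c₀ : Cell), ?_, hpoint⟩
      ext t
      simp only [Finset.mem_image]
      constructor
      · intro ht
        refine ⟨transposeCell (φ.symm ⟨t, ht⟩ : Cell),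
          ⟨(φ.symm ⟨t, ht⟩ : Cell), (φ.symm ⟨t, ht⟩).2, rfl⟩, ?_⟩
        have hp := hpoint (φ.symm ⟨t, ht⟩)
        rw [OrderIso.apply_symm_apply] at hp
        simpa using hp.symm
      · rintro ⟨a, ⟨c, hc, rfl⟩, rfl⟩
        have hp := hpoint ⟨c, hc⟩
        simp only at hp ⊢
        rw [← hp]
        exact (φ ⟨c, hc⟩).2
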